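/- arXiv:2012.15437 — 6 statements merged into one kernel-verified Lean document; each statement's English description precedes it below -/
import Mathlib

section
/- Let p(z) = a_n z^n + ... + a_1 z + a_0 be a univariate real polynomial. If z_1 and z_2 are two distinct real roots of p, and every real root of p in the open interval (z_1, z_2) has even multiplicity, then p'(z_1) · p'(z_2) ≤ 0. -/
open Polynomial Set Filter Topology

private lemma sign_helper (p : Polynomial ℝ) (z1 z2 : ℝ)
    (heven : ∀ z ∈ Set.Ioo z1 z2, p.eval z = 0 → Even (p.rootMultiplicity z))
    (a b : ℝ) (ha : a ∈ Set.Ioo z1 z2) (hb : b ∈ Set.Ioo z1 z2) (hab : a < b)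
    (hpa : 0 < p.eval a) (hpb : p.eval b < 0) : False := by
  have hcont : Continuous fun x : ℝ => p.eval x := p.continuous
  set S : Set ℝ := {x | x ∈ Set.Icc a b ∧ 0 < p.eval x} with hS
  have hane : a ∈ S := ⟨⟨le_refl a, hab.le⟩, hpa⟩
  have hbd : BddAbove S := ⟨b, fun x hx => hx.1.2⟩
  set c := sSup S with hc
  have hac : a ≤ c := le_csSup hbd hane
  have hcb : c ≤ b := csSup_le ⟨a, hane⟩ fun x hx => hx.1.2
  have hpc : p.eval c = 0 := by
    rcases lt_trichotomy (p.eval c) 0 with h | h | h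
    · have hca : a < c := hac.lt_of_ne fun hce => absurd h (asymm (hce ▸ hpa))
      have hmem : {x : ℝ | p.eval x < 0} ∈ 𝓝 c :=
        (isOpen_lt hcont continuous_const).mem_nhds h
      obtain ⟨l, u, hclu, hsub⟩ := mem_nhds_iff_exists_Ioo_subset.1 hmem
      obtain ⟨x, hxS, hxgt⟩ := exists_lt_of_lt_csSup ⟨a, hane⟩
        (show max l a < c from max_lt hclu.1 hca)
      have hxc : x ≤ c := le_csSup hbd hxS
      have : p.eval x < 0 := hsub ⟨lt_of_le_of_lt (le_max_left l a) hxgt,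
        lt_of_le_of_lt hxc hclu.2⟩
      exact absurd hxS.2 (asymm this)
    · exact h
    · have hcbne : c < b := hcb.lt_of_ne fun hce => absurd h (asymm (hce.symm ▸ hpb))
      have hmem : {x : ℝ | 0 < p.eval x} ∈ 𝓝 c :=
        (isOpen_lt continuous_const hcont).mem_nhds h
      obtain ⟨l, u, hclu, hsub⟩ := mem_nhds_iff_exists_Ioo_subset.1 hmem
      obtain ⟨x, hx1, hx2⟩ := exists_between (lt_min hclu.2 hcbne)
      have hxS : x ∈ S := ⟨⟨hac.trans hx1.le, (hx2.trans_le (min_le_right _ _)).le⟩,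
        hsub ⟨hclu.1.trans hx1, hx2.trans_le (min_le_left _ _)⟩⟩
      exact absurd (le_csSup hbd hxS) (not_le.2 hx1)
  have hp0 : p ≠ 0 := fun h => by simp [h] at hpa
  set m := p.rootMultiplicity c with hm
  have hmev : Even m := heven c ⟨ha.1.trans_le hac, lt_of_le_of_lt hcb hb.2⟩ hpc
  set q := p /ₘ (X - C c) ^ m with hq
  have hfact : (X - C c) ^ m * q = p := p.pow_mul_divByMonic_rootMultiplicity_eq c
  have hqc : q.eval c ≠ 0 := p.eval_divByMonic_pow_rootMultiplicity_ne_zero c hp0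
  have peval : ∀ x : ℝ, p.eval x = (x - c) ^ m * q.eval x := fun x => by
    conv_lhs => rw [← hfact]
    simp [eval_mul, eval_pow]
  have hqcont : Continuous fun x : ℝ => q.eval x := q.continuous
  rcases hqc.lt_or_gt with h | h
  · -- q c < 0 : contradiction with points of S just below c
    have hca : a < c := hac.lt_of_ne fun hce => absurd hpc (hce ▸ hpa).ne'
    have hmem : {x : ℝ | q.eval x < 0} ∈ 𝓝 c :=
      (isOpen_lt hqcont continuous_const).mem_nhds h
    obtain ⟨l, u, hclu, hsub⟩ := mem_nhds_iff_exists_Ioo_subset.1 hmem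
    obtain ⟨x, hxS, hxgt⟩ := exists_lt_of_lt_csSup ⟨a, hane⟩
      (show max l a < c from max_lt hclu.1 hca)
    have hxc : x ≤ c := le_csSup hbd hxS
    have hxne : x ≠ c := fun hxe => absurd hpc (hxe ▸ hxS.2).ne'
    have hqx : q.eval x < 0 := hsub ⟨lt_of_le_of_lt (le_max_left l a) hxgt,
      lt_of_le_of_lt hxc hclu.2⟩
    have hpow : 0 < (x - c) ^ m := hmev.pow_pos (sub_ne_zero.2 hxne)
    have : p.eval x < 0 := by rw [peval x]; exact mul_neg_of_pos_of_neg hpow hqx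
    exact absurd hxS.2 (asymm this)
  · -- q c > 0 : points just above c belong to S
    have hcbne : c < b := hcb.lt_of_ne fun hce => absurd hpc (hce.symm ▸ hpb).ne
    have hmem : {x : ℝ | 0 < q.eval x} ∈ 𝓝 c :=
      (isOpen_lt continuous_const hqcont).mem_nhds h
    obtain ⟨l, u, hclu, hsub⟩ := mem_nhds_iff_exists_Ioo_subset.1 hmem
    obtain ⟨x, hx1, hx2⟩ := exists_between (lt_min hclu.2 hcbne)
    have hqx : 0 < q.eval x := hsub ⟨hclu.1.trans hx1, hx2.trans_le (min_le_left _ _)⟩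
    have hpow : 0 < (x - c) ^ m := hmev.pow_pos (sub_ne_zero.2 hx1.ne')
    have hpx : 0 < p.eval x := by rw [peval x]; exact mul_pos hpow hqx
    have hxS : x ∈ S := ⟨⟨hac.trans hx1.le, (hx2.trans_le (min_le_right _ _)).le⟩, hpx⟩
    exact absurd (le_csSup hbd hxS) (not_le.2 hx1)

private lemma no_sign_change (p : Polynomial ℝ) (z1 z2 : ℝ)
    (heven : ∀ z ∈ Set.Ioo z1 z2, p.eval z = 0 → Even (p.rootMultiplicity z)) :
    (∀ x ∈ Set.Ioo z1 z2, 0 ≤ p.eval x) ∨ (∀ x ∈ Set.Ioo z1 z2, p.eval x ≤ 0) := by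
  by_contra h
  push_neg at h
  obtain ⟨⟨a, ha, hpa⟩, ⟨b, hb, hpb⟩⟩ := h
  -- hpa : p.eval a < 0, hpb : 0 < p.eval b
  rcases lt_trichotomy a b with hab | rfl | hba
  · -- p a < 0 < p b : apply the helper to -p
    have hp0 : p ≠ 0 := fun h => by simp [h] at hpb
    have hrm : ∀ z : ℝ, (-p).rootMultiplicity z = p.rootMultiplicity z := fun z => by
      have : (-p : Polynomial ℝ) = C (-1) * p := by simp
      rw [this, rootMultiplicity_mul (by simpa using hp0), rootMultiplicity_C, zero_add]
    have heven' : ∀ z ∈ Set.Ioo z1 z2, (-p).eval z = 0 → Even ((-p).rootMultiplicity z) := by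
      intro z hz hz0
      rw [hrm]
      exact heven z hz (by simpa using hz0)
    exact sign_helper (-p) z1 z2 heven' a b ha hb hab (by simpa using hpa) (by simpa using hpb)
  · exact absurd hpb (asymm hpa)
  · exact sign_helper p z1 z2 heven b a hb ha hba hpb hpa

private lemma deriv_sign_left (p : Polynomial ℝ) (z1 z2 : ℝ) (h12 : z1 < z2)
    (h1 : p.eval z1 = 0) (hnn : ∀ x ∈ Set.Ioo z1 z2, 0 ≤ p.eval x) :
    0 ≤ p.derivative.eval z1 := by
  have hd := (p.hasDerivAt z1)
  rw [hasDerivAt_iff_tendsto_slope] at hd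
  have hd' : Tendsto (slope (fun x => p.eval x) z1) (𝓝[>] z1)
      (𝓝 (p.derivative.eval z1)) :=
    hd.mono_left (nhdsWithin_mono _ fun x hx => ne_of_gt hx)
  refine ge_of_tendsto hd' ?_
  filter_upwards [Ioo_mem_nhdsGT_of_mem (Set.left_mem_Ico.2 h12)] with x hx
  rw [slope_def_field, h1, sub_zero]
  exact div_nonneg (hnn x hx) (sub_nonneg.2 hx.1.le)

private lemma deriv_sign_right (p : Polynomial ℝ) (z1 z2 : ℝ) (h12 : z1 < z2)
    (h2 : p.eval z2 = 0) (hnn : ∀ x ∈ Set.Ioo z1 z2, 0 ≤ p.eval x) :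
    p.derivative.eval z2 ≤ 0 := by
  have hd := (p.hasDerivAt z2)
  rw [hasDerivAt_iff_tendsto_slope] at hd
  have hd' : Tendsto (slope (fun x => p.eval x) z2) (𝓝[<] z2)
      (𝓝 (p.derivative.eval z2)) :=
    hd.mono_left (nhdsWithin_mono _ fun x hx => ne_of_lt hx)
  refine le_of_tendsto hd' ?_
  filter_upwards [Ioo_mem_nhdsLT_of_mem (Set.right_mem_Ioc.2 h12)] with x hx
  rw [slope_def_field, h2, sub_zero]
  exact div_nonpos_of_nonneg_of_nonpos (hnn x hx) (sub_nonpos.2 hx.2.le)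

/-- If `z₁ < z₂` are two distinct real roots of a univariate real polynomial `p`,
and every real root of `p` in the open interval `(z₁, z₂)` has even multiplicity,
then `p'(z₁) * p'(z₂) ≤ 0`. -/
theorem stmt0 (p : Polynomial ℝ) (z1 z2 : ℝ) (h12 : z1 < z2)
    (h1 : p.eval z1 = 0) (h2 : p.eval z2 = 0)
    (heven : ∀ z ∈ Set.Ioo z1 z2, p.eval z = 0 → Even (p.rootMultiplicity z)) :
    p.derivative.eval z1 * p.derivative.eval z2 ≤ 0 := by
  rcases no_sign_change p z1 z2 heven with hnn | hnp
  · exact mul_nonpos_of_nonneg_of_nonpos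
      (deriv_sign_left p z1 z2 h12 h1 hnn) (deriv_sign_right p z1 z2 h12 h2 hnn)
  · have hnn : ∀ x ∈ Set.Ioo z1 z2, 0 ≤ (-p).eval x := fun x hx => by
      simpa using hnp x hx
    have hl := deriv_sign_left (-p) z1 z2 h12 (by simp [h1]) hnn
    have hr := deriv_sign_right (-p) z1 z2 h12 (by simp [h2]) hnn
    simp only [derivative_neg, eval_neg] at hl hr
    exact mul_nonpos_of_nonpos_of_nonneg (by linarith) (by linarith)
end

section
/- Let p be a univariate real polynomial and let a ∈ ℝ, M ∈ ℝ ∪ {+∞}. Suppose the equation p(z) = 0 has exactly N > 0 real solutions z^(1) < ... < z^(N) in the open interval (a, M), where z^(1) is a simple root and every multiple root among them has odd multiplicity. If p(a) ≠ 0, then sign(p(a)) = -sign(p'(z^(1))). -/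
/-- If `p(z) = 0` has exactly `N > 0` real solutions `z 0 < ... < z (N-1)` in the open
interval `(a, M)` (with `M` possibly `+∞`), where `z 0` is a simple root and every
multiple root among them has odd multiplicity, and `p(a) ≠ 0`, then
`sign (p(a)) = - sign (p'(z 0))`. -/
theorem stmt1 (p : Polynomial ℝ) (a : ℝ) (M : EReal)
    (N : ℕ) (hN : 0 < N) (z : Fin N → ℝ) (hmono : StrictMono z)
    (hroots : ∀ i, a < z i ∧ ((z i : EReal) < M) ∧ p.eval (z i) = 0)
    (hexact : ∀ x : ℝ, a < x → (x : EReal) < M → p.eval x = 0 → ∃ i, x = z i)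
    (hsimple : p.derivative.eval (z ⟨0, hN⟩) ≠ 0)
    (hodd : ∀ i, p.derivative.eval (z i) = 0 → Odd (p.rootMultiplicity (z i)))
    (hpa : p.eval a ≠ 0) :
    Real.sign (p.eval a) = - Real.sign (p.derivative.eval (z ⟨0, hN⟩)) := by
  set z0 : ℝ := z ⟨0, hN⟩ with hz0def
  obtain ⟨haz0, hz0M, hpz0⟩ := hroots ⟨0, hN⟩
  -- factor p = (X - C z0) * q
  have hdvd : (Polynomial.X - Polynomial.C z0) ∣ p := by
    rw [Polynomial.dvd_iff_isRoot]; exact hpz0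
  obtain ⟨q, hq⟩ := hdvd
  -- p'(z0) = q(z0)
  have hderiv : p.derivative.eval z0 = q.eval z0 := by
    rw [hq]; simp [Polynomial.derivative_mul]
  -- q has no root on [a, z0)
  have hnoroot : ∀ x, a ≤ x → x < z0 → q.eval x ≠ 0 := by
    intro x hax hxz0 hqx
    have hpx : p.eval x = 0 := by rw [hq]; simp [hqx]
    rcases eq_or_lt_of_le hax with h | h
    · exact hpa (h ▸ hpx)
    · have hxM : (x : EReal) < M := lt_trans (by exact_mod_cast hxz0) hz0M
      obtain ⟨i, hi⟩ := hexact x h hxM hpx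
      have : z0 ≤ z i := hmono.monotone (by simp [Fin.le_def])
      rw [← hi] at this
      linarith
  have hqz0 : q.eval z0 ≠ 0 := hderiv ▸ hsimple
  have hqa : q.eval a ≠ 0 := hnoroot a le_rfl haz0
  have hpaq : p.eval a = (a - z0) * q.eval a := by rw [hq]; simp
  have haz0' : a < z0 := haz0
  -- sign constancy: q(a) and q(z0) have the same sign
  have hsign : 0 < q.eval a * q.eval z0 := by
    by_contra hcon
    push_neg at hcon
    have hlt : q.eval a * q.eval z0 < 0 :=
      lt_of_le_of_ne hcon (mul_ne_zero hqa hqz0)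
    have hcont : ContinuousOn (fun x => q.eval x) (Set.Icc a z0) :=
      q.continuousOn
    rcases lt_or_gt_of_ne hqa with hlt1 | hgt1
    · have h2 : 0 < q.eval z0 := by nlinarith
      obtain ⟨c, hc, hc0⟩ := intermediate_value_Ioo (le_of_lt haz0') hcont ⟨hlt1, h2⟩
      exact hnoroot c (le_of_lt hc.1) hc.2 hc0
    · have h2 : q.eval z0 < 0 := by nlinarith
      obtain ⟨c, hc, hc0⟩ := intermediate_value_Ioo' (le_of_lt haz0') hcont ⟨h2, hgt1⟩
      exact hnoroot c (le_of_lt hc.1) hc.2 hc0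
  rw [hderiv, hpaq]
  rcases lt_or_gt_of_ne hqz0 with hneg | hpos
  · have hqa' : q.eval a < 0 := by nlinarith
    have : 0 < (a - z0) * q.eval a := by nlinarith
    rw [Real.sign_of_pos this, Real.sign_of_neg hneg]
    norm_num
  · have hqa' : 0 < q.eval a := by nlinarith
    have : (a - z0) * q.eval a < 0 := by nlinarith
    rw [Real.sign_of_neg this, Real.sign_of_pos hpos]
end

section
/- Let φ : ℝ → ℝ be a 2N-times continuously differentiable function on a neighborhood of x* (N ≥ 1) satisfying φ(x*) = κ*, φ'(x*) = 0, ..., φ^(2N-1)(x*) = 0, and φ^(2N)(x) ≠ 0 for all x in an interval (x* - ε, x* + ε) on which φ^(2N) has constant sign σ ∈ {+1, -1}. Then there exists δ > 0 such that for all δ' ∈ (0, δ): (1) the equation φ(x) = κ* + σ·δ' has exactly two solutions x^(1), x^(2) in (x* - ε, x* + ε), with x^(2) < x* < x^(1), and φ'(x^(i)) ≠ 0 at both; (2) the equation φ(x) = κ* - σ·δ' has no solutions in (x* - ε, x* + ε). -/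
/-- Even-multiplicity perturbation lemma: if `φ` is `2N`-times continuously
differentiable on `(x* - ε, x* + ε)` with `φ(x*) = κ*`, vanishing derivatives up to
order `2N - 1` at `x*`, and `2N`-th derivative of constant sign `σ` on the interval,
then for small one-sided perturbations `δ'` of the level: the level `κ* + σδ'` has
exactly two simple preimages straddling `x*`, and the level `κ* - σδ'` has none. -/
theorem stmt4 (N : ℕ) (hN : 1 ≤ N) (φ : ℝ → ℝ) (xs κs ε : ℝ) (hε : 0 < ε)
    (hsmooth : ContDiffOn ℝ (2 * N) φ (Set.Ioo (xs - ε) (xs + ε)))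
    (hmem : xs ∈ Set.Ioo (xs - ε) (xs + ε))
    (hval : φ xs = κs)
    (hderiv : ∀ k : ℕ, 1 ≤ k → k ≤ 2 * N - 1 →
      iteratedDerivWithin k φ (Set.Ioo (xs - ε) (xs + ε)) xs = 0)
    (σ : ℝ) (hσ : σ = 1 ∨ σ = -1)
    (hsign : ∀ x ∈ Set.Ioo (xs - ε) (xs + ε),
      Real.sign (iteratedDerivWithin (2 * N) φ (Set.Ioo (xs - ε) (xs + ε)) x) = σ) :
    ∃ δ > 0, ∀ δ' ∈ Set.Ioo (0 : ℝ) δ,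
      (∃ x1 x2 : ℝ, x1 ∈ Set.Ioo (xs - ε) (xs + ε) ∧ x2 ∈ Set.Ioo (xs - ε) (xs + ε) ∧
        x2 < xs ∧ xs < x1 ∧
        φ x1 = κs + σ * δ' ∧ φ x2 = κs + σ * δ' ∧
        deriv φ x1 ≠ 0 ∧ deriv φ x2 ≠ 0 ∧
        (∀ x ∈ Set.Ioo (xs - ε) (xs + ε), φ x = κs + σ * δ' → x = x1 ∨ x = x2)) ∧
      (∀ x ∈ Set.Ioo (xs - ε) (xs + ε), φ x ≠ κs - σ * δ') := by
  have hIopen : IsOpen (Set.Ioo (xs - ε) (xs + ε)) := isOpen_Ioo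
  have hIuniq : UniqueDiffOn ℝ (Set.Ioo (xs - ε) (xs + ε)) := hIopen.uniqueDiffOn
  set I := Set.Ioo (xs - ε) (xs + ε) with hIdef
  set G : ℕ → ℝ → ℝ := fun k => iteratedDerivWithin k φ I with hGdef
  have hσ2 : σ * σ = 1 := by rcases hσ with h | h <;> simp [h]
  have hσ0 : σ ≠ 0 := by rcases hσ with h | h <;> simp [h]
  -- base sign fact
  have hbase : ∀ x ∈ I, 0 < σ * G (2 * N) x := by
    intro x hx
    have hs := hsign x hx
    show 0 < σ * iteratedDerivWithin (2 * N) φ I x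
    rcases lt_trichotomy (iteratedDerivWithin (2 * N) φ I x) 0 with hg | hg | hg
    · rw [Real.sign_of_neg hg] at hs; nlinarith
    · rw [hg, Real.sign_zero] at hs; exact absurd hs.symm hσ0
    · rw [Real.sign_of_pos hg] at hs; nlinarith
  have hG_diff : ∀ k : ℕ, k < 2 * N → DifferentiableOn ℝ (G k) I := by
    intro k hk
    exact hsmooth.differentiableOn_iteratedDerivWithin (by exact_mod_cast hk) hIuniq
  have hG_deriv : ∀ k : ℕ, ∀ x ∈ I, G (k + 1) x = deriv (G k) x := by
    intro k x hx
    show iteratedDerivWithin (k + 1) φ I x = _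
    rw [iteratedDerivWithin_succ, derivWithin_of_isOpen hIopen hx]
  -- generic one-sided positivity from derivative sign
  have right_pos : ∀ (f : ℝ → ℝ) (c : ℝ), DifferentiableOn ℝ f I → f xs = 0 →
      (∀ y ∈ I, xs < y → 0 < c * deriv f y) →
      ∀ x ∈ I, xs < x → 0 < c * f x := by
    intro f c hdf hf0 hdpos x hx hxgt
    have hsub : Set.Icc xs x ⊆ I := Set.Icc_subset_Ioo hmem.1 hx.2
    have hcont : ContinuousOn (fun y => c * f y) (Set.Icc xs x) :=
      (continuousOn_const.mul hdf.continuousOn).mono hsub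
    have hmono : StrictMonoOn (fun y => c * f y) (Set.Icc xs x) := by
      apply strictMonoOn_of_deriv_pos (convex_Icc _ _) hcont
      intro y hy
      rw [interior_Icc] at hy
      have hyI : y ∈ I := hsub (Set.Ioo_subset_Icc_self hy)
      have hda : DifferentiableAt ℝ f y := (hdf y hyI).differentiableAt (hIopen.mem_nhds hyI)
      rw [deriv_const_mul c hda]
      exact hdpos y hyI hy.1
    have := hmono (Set.left_mem_Icc.mpr hxgt.le) (Set.right_mem_Icc.mpr hxgt.le) hxgt
    simpa [hf0] using this
  have left_neg : ∀ (f : ℝ → ℝ) (c : ℝ), DifferentiableOn ℝ f I → f xs = 0 →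
      (∀ y ∈ I, y < xs → 0 < c * deriv f y) →
      ∀ x ∈ I, x < xs → c * f x < 0 := by
    intro f c hdf hf0 hdpos x hx hxlt
    have hsub : Set.Icc x xs ⊆ I := Set.Icc_subset_Ioo hx.1 hmem.2
    have hcont : ContinuousOn (fun y => c * f y) (Set.Icc x xs) :=
      (continuousOn_const.mul hdf.continuousOn).mono hsub
    have hmono : StrictMonoOn (fun y => c * f y) (Set.Icc x xs) := by
      apply strictMonoOn_of_deriv_pos (convex_Icc _ _) hcont
      intro y hy
      rw [interior_Icc] at hy
      have hyI : y ∈ I := hsub (Set.Ioo_subset_Icc_self hy)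
      have hda : DifferentiableAt ℝ f y := (hdf y hyI).differentiableAt (hIopen.mem_nhds hyI)
      rw [deriv_const_mul c hda]
      exact hdpos y hyI hy.2
    have := hmono (Set.left_mem_Icc.mpr hxlt.le) (Set.right_mem_Icc.mpr hxlt.le) hxlt
    simpa [hf0] using this
  -- key downward induction
  have key : ∀ m : ℕ, ∀ k : ℕ, k + m = 2 * N → 1 ≤ k →
      ∀ x ∈ I, (xs < x → 0 < σ * G k x) ∧ (x < xs → 0 < (-1 : ℝ) ^ k * σ * G k x) := by
    intro m
    induction m with
    | zero =>
      intro k hk _ x hx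
      have hk' : k = 2 * N := by omega
      subst hk'
      refine ⟨fun _ => hbase x hx, fun _ => ?_⟩
      have hpow : (-1 : ℝ) ^ (2 * N) = 1 := by
        rw [pow_mul]; norm_num
      rw [hpow, one_mul]
      exact hbase x hx
    | succ m ih =>
      intro k hk hk1 x hx
      have hk2 : k + 1 + m = 2 * N := by omega
      have hGxs : G k xs = 0 := hderiv k hk1 (by omega)
      have hdiff := hG_diff k (by omega)
      constructor
      · intro hxgt
        refine right_pos (G k) σ hdiff hGxs ?_ x hx hxgt
        intro y hy hylt
        rw [← hG_deriv k y hy]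
        exact ((ih (k + 1) hk2 (by omega) y hy).1 hylt)
      · intro hxlt
        have hneg : ((-1 : ℝ) ^ (k + 1) * σ) * G k x < 0 := by
          refine left_neg (G k) ((-1 : ℝ) ^ (k + 1) * σ) hdiff hGxs ?_ x hx hxlt
          intro y hy hylt
          rw [← hG_deriv k y hy]
          exact ((ih (k + 1) hk2 (by omega) y hy).2 hylt)
        have hps : (-1 : ℝ) ^ (k + 1) = -((-1 : ℝ) ^ k) := by rw [pow_succ]; ring
        rw [hps] at hneg
        nlinarith [hneg]
  have key1 := key (2 * N - 1) 1 (by omega) le_rfl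
  -- first derivative facts
  have hφd : DifferentiableOn ℝ φ I := hsmooth.differentiableOn (by
    have : 1 ≤ 2 * N := by omega
    exact_mod_cast (by omega : 2 * N ≠ 0))
  have hG1 : ∀ y ∈ I, G 1 y = deriv φ y := by
    intro y hy
    show iteratedDerivWithin 1 φ I y = _
    rw [iteratedDerivWithin_one, derivWithin_of_isOpen hIopen hy]
  have hd_right : ∀ y ∈ I, xs < y → 0 < σ * deriv φ y := by
    intro y hy hlt
    rw [← hG1 y hy]; exact (key1 y hy).1 hlt
  have hd_left : ∀ y ∈ I, y < xs → σ * deriv φ y < 0 := by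
    intro y hy hlt
    have := (key1 y hy).2 hlt
    rw [← hG1 y hy]
    simpa using by nlinarith [this]
  -- the scaled function h
  set h : ℝ → ℝ := fun y => σ * (φ y - κs) with hhdef
  have hhxs : h xs = 0 := by simp [hhdef, hval]
  have hcontI : ContinuousOn h I :=
    continuousOn_const.mul (hφd.continuousOn.sub continuousOn_const)
  have hderivh : ∀ y ∈ I, y ≠ xs → deriv h y = σ * deriv φ y := by
    intro y hy _
    have hda : DifferentiableAt ℝ φ y := (hφd y hy).differentiableAt (hIopen.mem_nhds hy)
    rw [hhdef]
    rw [deriv_const_mul σ (hda.sub_const κs), deriv_sub_const]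
  have hsubR : Set.Ico xs (xs + ε) ⊆ I := by
    intro y hy; exact ⟨lt_of_lt_of_le (by linarith [hmem.1]) hy.1, hy.2⟩
  have hsubL : Set.Ioc (xs - ε) xs ⊆ I := by
    intro y hy; exact ⟨hy.1, lt_of_le_of_lt hy.2 hmem.2⟩
  have monoR : StrictMonoOn h (Set.Ico xs (xs + ε)) := by
    apply strictMonoOn_of_deriv_pos (convex_Ico _ _) (hcontI.mono hsubR)
    intro y hy
    rw [interior_Ico] at hy
    have hyI : y ∈ I := hsubR ⟨hy.1.le, hy.2⟩
    rw [hderivh y hyI (ne_of_gt hy.1)]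
    exact hd_right y hyI hy.1
  have monoL : StrictAntiOn h (Set.Ioc (xs - ε) xs) := by
    apply strictAntiOn_of_deriv_neg (convex_Ioc _ _) (hcontI.mono hsubL)
    intro y hy
    rw [interior_Ioc] at hy
    have hyI : y ∈ I := hsubL ⟨hy.1, hy.2.le⟩
    rw [hderivh y hyI (ne_of_lt hy.2)]
    exact hd_left y hyI hy.2
  have hpos : ∀ x ∈ I, x ≠ xs → 0 < h x := by
    intro x hx hne
    rcases hne.lt_or_gt with hlt | hgt
    · have := monoL ⟨hx.1, hlt.le⟩ ⟨hmem.1, le_rfl⟩ hlt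
      rw [hhxs] at this; exact this
    · have := monoR ⟨le_rfl, hmem.2⟩ ⟨hgt.le, hx.2⟩ hgt
      rw [hhxs] at this; exact this
  -- choose δ
  have haI : xs + ε / 2 ∈ I := ⟨by linarith, by linarith⟩
  have hbI : xs - ε / 2 ∈ I := ⟨by linarith, by linarith⟩
  have hha : 0 < h (xs + ε / 2) := hpos _ haI (by linarith)
  have hhb : 0 < h (xs - ε / 2) := hpos _ hbI (by linarith)
  refine ⟨min (h (xs + ε / 2)) (h (xs - ε / 2)), lt_min hha hhb, ?_⟩
  intro δ' hδ'
  obtain ⟨hδ0, hδlt⟩ := hδ'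
  have hδa : δ' < h (xs + ε / 2) := lt_of_lt_of_le hδlt (min_le_left _ _)
  have hδb : δ' < h (xs - ε / 2) := lt_of_lt_of_le hδlt (min_le_right _ _)
  -- existence of x1 on the right
  have hIccR : Set.Icc xs (xs + ε / 2) ⊆ I := Set.Icc_subset_Ioo hmem.1 haI.2
  have hx1ex : ∃ x1 ∈ Set.Ioo xs (xs + ε / 2), h x1 = δ' := by
    have := intermediate_value_Ioo (by linarith : xs ≤ xs + ε / 2) (hcontI.mono hIccR)
    have hmemv : δ' ∈ Set.Ioo (h xs) (h (xs + ε / 2)) := by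
      rw [hhxs]; exact ⟨hδ0, hδa⟩
    obtain ⟨x1, hx1, hx1v⟩ := this hmemv
    exact ⟨x1, hx1, hx1v⟩
  have hIccL : Set.Icc (xs - ε / 2) xs ⊆ I := Set.Icc_subset_Ioo hbI.1 hmem.2
  have hx2ex : ∃ x2 ∈ Set.Ioo (xs - ε / 2) xs, h x2 = δ' := by
    have := intermediate_value_Ioo' (by linarith : xs - ε / 2 ≤ xs) (hcontI.mono hIccL)
    have hmemv : δ' ∈ Set.Ioo (h xs) (h (xs - ε / 2)) := by
      rw [hhxs]; exact ⟨hδ0, hδb⟩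
    obtain ⟨x2, hx2, hx2v⟩ := this hmemv
    exact ⟨x2, hx2, hx2v⟩
  obtain ⟨x1, hx1mem, hx1v⟩ := hx1ex
  obtain ⟨x2, hx2mem, hx2v⟩ := hx2ex
  have hx1I : x1 ∈ I := ⟨by linarith [hx1mem.1, hmem.1], by linarith [hx1mem.2]⟩
  have hx2I : x2 ∈ I := ⟨by linarith [hx2mem.1], by linarith [hx2mem.2, hmem.2]⟩
  have hval_of_h : ∀ x : ℝ, h x = δ' → φ x = κs + σ * δ' := by
    intro x hxv
    have hxv' : σ * (φ x - κs) = δ' := hxv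
    have h2 : σ * (σ * (φ x - κs)) = σ * δ' := by rw [hxv']
    rw [← mul_assoc, hσ2, one_mul] at h2
    linarith
  have h_of_val : ∀ x : ℝ, φ x = κs + σ * δ' → h x = δ' := by
    intro x hxv
    show σ * (φ x - κs) = δ'
    rw [hxv, show κs + σ * δ' - κs = σ * δ' from by ring, ← mul_assoc, hσ2, one_mul]
  constructor
  · refine ⟨x1, x2, hx1I, hx2I, hx2mem.2, hx1mem.1, hval_of_h x1 hx1v, hval_of_h x2 hx2v,
      ?_, ?_, ?_⟩
    · intro hc
      have := hd_right x1 hx1I hx1mem.1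
      rw [hc, mul_zero] at this; exact lt_irrefl _ this
    · intro hc
      have := hd_left x2 hx2I hx2mem.2
      rw [hc, mul_zero] at this; exact lt_irrefl _ this
    · intro x hxI hxv
      have hhx : h x = δ' := h_of_val x hxv
      have hne : x ≠ xs := by
        intro he; rw [he, hhxs] at hhx; linarith
      rcases hne.lt_or_gt with hlt | hgt
      · right
        have hxm : x ∈ Set.Ioc (xs - ε) xs := ⟨hxI.1, hlt.le⟩
        have hx2m : x2 ∈ Set.Ioc (xs - ε) xs := ⟨hx2I.1, hx2mem.2.le⟩
        exact monoL.injOn hxm hx2m (by rw [hhx, hx2v])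
      · left
        have hxm : x ∈ Set.Ico xs (xs + ε) := ⟨hgt.le, hxI.2⟩
        have hx1m : x1 ∈ Set.Ico xs (xs + ε) := ⟨hx1mem.1.le, hx1I.2⟩
        exact monoR.injOn hxm hx1m (by rw [hhx, hx1v])
  · intro x hxI hxv
    have hhx : h x = -δ' := by
      show σ * (φ x - κs) = -δ'
      rw [hxv, show κs - σ * δ' - κs = -(σ * δ') from by ring]
      rw [mul_neg, ← mul_assoc, hσ2, one_mul]
    by_cases hne : x = xs
    · rw [hne, hhxs] at hhx; linarith
    · have := hpos x hxI hne; linarith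
end

section
/- Let φ : ℝ → ℝ be a (2N+1)-times continuously differentiable function on a neighborhood of x* (N ≥ 0) with φ(x*) = κ*, φ'(x*) = 0, ..., φ^(2N)(x*) = 0, and φ^(2N+1)(x) ≠ 0 on an interval (x* - ε, x* + ε) where it has constant sign σ. Then there exists δ > 0 such that for all δ' ∈ (0, δ): the equation φ(x) = κ* + σ·δ' has a solution x^(1) with 0 < x^(1) - x* < ε and φ'(x^(1)) ≠ 0, and the equation φ(x) = κ* - σ·δ' has a solution x^(2) with -ε < x^(2) - x* < 0 and φ'(x^(2)) ≠ 0. -/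
/-- Helper: if `f c = 0` and `deriv f > 0` on the punctured interval, then `f` is
positive right of `c` and negative left of `c`. -/
lemma stmt5_auxA {a b c : ℝ} {f : ℝ → ℝ} (hc : c ∈ Set.Ioo a b)
    (hd : ∀ x ∈ Set.Ioo a b, DifferentiableAt ℝ f x)
    (h0 : f c = 0)
    (hp : ∀ x ∈ Set.Ioo a b, x ≠ c → 0 < deriv f x) :
    ∀ x ∈ Set.Ioo a b, (c < x → 0 < f x) ∧ (x < c → f x < 0) := by
  intro x hx
  constructor
  · intro hcx
    have hsub : Set.Icc c x ⊆ Set.Ioo a b := Set.Icc_subset_Ioo hc.1 hx.2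
    have hmono : StrictMonoOn f (Set.Icc c x) := by
      apply strictMonoOn_of_deriv_pos (convex_Icc c x)
      · exact fun y hy => (hd y (hsub hy)).continuousAt.continuousWithinAt
      · intro y hy
        rw [interior_Icc] at hy
        exact hp y (hsub (Set.Ioo_subset_Icc_self hy)) (ne_of_gt hy.1)
    have := hmono (Set.left_mem_Icc.2 hcx.le) (Set.right_mem_Icc.2 hcx.le) hcx
    linarith [this]
  · intro hxc
    have hsub : Set.Icc x c ⊆ Set.Ioo a b := Set.Icc_subset_Ioo hx.1 hc.2
    have hmono : StrictMonoOn f (Set.Icc x c) := by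
      apply strictMonoOn_of_deriv_pos (convex_Icc x c)
      · exact fun y hy => (hd y (hsub hy)).continuousAt.continuousWithinAt
      · intro y hy
        rw [interior_Icc] at hy
        exact hp y (hsub (Set.Ioo_subset_Icc_self hy)) (ne_of_lt hy.2)
    have := hmono (Set.left_mem_Icc.2 hxc.le) (Set.right_mem_Icc.2 hxc.le) hxc
    linarith [this]

/-- Helper: if `f c = 0` and `deriv f` is positive right of `c`, negative left of `c`,
then `f` is positive on the punctured interval. -/
lemma stmt5_auxB {a b c : ℝ} {f : ℝ → ℝ} (hc : c ∈ Set.Ioo a b)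
    (hd : ∀ x ∈ Set.Ioo a b, DifferentiableAt ℝ f x)
    (h0 : f c = 0)
    (hp : ∀ x ∈ Set.Ioo a b, (c < x → 0 < deriv f x) ∧ (x < c → deriv f x < 0)) :
    ∀ x ∈ Set.Ioo a b, x ≠ c → 0 < f x := by
  intro x hx hne
  rcases hne.lt_or_gt with hxc | hcx
  · have hsub : Set.Icc x c ⊆ Set.Ioo a b := Set.Icc_subset_Ioo hx.1 hc.2
    have hanti : StrictAntiOn f (Set.Icc x c) := by
      apply strictAntiOn_of_deriv_neg (convex_Icc x c)
      · exact fun y hy => (hd y (hsub hy)).continuousAt.continuousWithinAt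
      · intro y hy
        rw [interior_Icc] at hy
        exact (hp y (hsub (Set.Ioo_subset_Icc_self hy))).2 hy.2
    have := hanti (Set.left_mem_Icc.2 hxc.le) (Set.right_mem_Icc.2 hxc.le) hxc
    linarith [this]
  · have hsub : Set.Icc c x ⊆ Set.Ioo a b := Set.Icc_subset_Ioo hc.1 hx.2
    have hmono : StrictMonoOn f (Set.Icc c x) := by
      apply strictMonoOn_of_deriv_pos (convex_Icc c x)
      · exact fun y hy => (hd y (hsub hy)).continuousAt.continuousWithinAt
      · intro y hy
        rw [interior_Icc] at hy
        exact (hp y (hsub (Set.Ioo_subset_Icc_self hy))).1 hy.1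
    have := hmono (Set.left_mem_Icc.2 hcx.le) (Set.right_mem_Icc.2 hcx.le) hcx
    linarith [this]

lemma stmt5_sign_mul_pos {σ y : ℝ} (hσ : σ = 1 ∨ σ = -1) (h : Real.sign y = σ) :
    0 < σ * y := by
  rcases lt_trichotomy y 0 with hy | hy | hy
  · rw [Real.sign_of_neg hy] at h
    rw [← h]; nlinarith
  · subst hy; rw [Real.sign_zero] at h
    rcases hσ with h1 | h1 <;> rw [h1] at h <;> norm_num at h
  · rw [Real.sign_of_pos hy] at h
    rw [← h]; nlinarith

/-- Odd-multiplicity perturbation lemma: if `φ` is `(2N+1)`-times continuously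
differentiable on `(x* - ε, x* + ε)` with `φ(x*) = κ*`, vanishing derivatives up to
order `2N` at `x*`, and `(2N+1)`-st derivative of constant sign `σ` on the interval,
then for all small `δ' > 0` the level `κ* + σδ'` has a simple preimage just to the
right of `x*` and the level `κ* - σδ'` has one just to the left. -/
theorem stmt5 (N : ℕ) (φ : ℝ → ℝ) (xs κs ε : ℝ) (hε : 0 < ε)
    (hsmooth : ContDiffOn ℝ (2 * N + 1) φ (Set.Ioo (xs - ε) (xs + ε)))
    (hmem : xs ∈ Set.Ioo (xs - ε) (xs + ε))
    (hval : φ xs = κs)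
    (hderiv : ∀ k : ℕ, 1 ≤ k → k ≤ 2 * N →
      iteratedDerivWithin k φ (Set.Ioo (xs - ε) (xs + ε)) xs = 0)
    (σ : ℝ) (hσ : σ = 1 ∨ σ = -1)
    (hsign : ∀ x ∈ Set.Ioo (xs - ε) (xs + ε),
      Real.sign (iteratedDerivWithin (2 * N + 1) φ (Set.Ioo (xs - ε) (xs + ε)) x) = σ) :
    ∃ δ > 0, ∀ δ' ∈ Set.Ioo (0 : ℝ) δ,
      (∃ x1 : ℝ, 0 < x1 - xs ∧ x1 - xs < ε ∧ φ x1 = κs + σ * δ' ∧ deriv φ x1 ≠ 0) ∧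
      (∃ x2 : ℝ, -ε < x2 - xs ∧ x2 - xs < 0 ∧ φ x2 = κs - σ * δ' ∧ deriv φ x2 ≠ 0) := by
  set I := Set.Ioo (xs - ε) (xs + ε) with hI
  have hIopen : IsOpen I := isOpen_Ioo
  have hIuniq : UniqueDiffOn ℝ I := hIopen.uniqueDiffOn
  set g : ℕ → ℝ → ℝ := fun k => iteratedDerivWithin k φ I with hg
  have hσ2 : σ * σ = 1 := by rcases hσ with h | h <;> rw [h] <;> norm_num
  -- differentiability of the iterated derivatives
  have hgdiff : ∀ k : ℕ, k ≤ 2 * N → ∀ x ∈ I, DifferentiableAt ℝ (g k) x := by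
    intro k hk x hx
    have : DifferentiableOn ℝ (g k) I := by
      apply hsmooth.differentiableOn_iteratedDerivWithin _ hIuniq
      exact_mod_cast Nat.lt_succ_of_le hk
    exact (this x hx).differentiableAt (hIopen.mem_nhds hx)
  -- deriv of g k equals g (k+1) on I
  have hgsucc : ∀ k : ℕ, ∀ x ∈ I, deriv (g k) x = g (k + 1) x := by
    intro k x hx
    show deriv (iteratedDerivWithin k φ I) x = iteratedDerivWithin (k + 1) φ I x
    rw [iteratedDerivWithin_succ, derivWithin_of_isOpen hIopen hx]
  -- the descending sign propagation
  have key : ∀ j : ℕ, j ≤ N → ∀ x ∈ I, x ≠ xs → 0 < σ * g (2 * (N - j) + 1) x := by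
    intro j
    induction j with
    | zero =>
      intro _ x hx _
      have := hsign x hx
      simpa using stmt5_sign_mul_pos hσ this
    | succ j ih =>
      intro hj x hx hne
      have hjN : j ≤ N := by omega
      have ihj := ih hjN
      set m := 2 * (N - (j + 1)) + 1 with hm
      have hm2 : 2 * (N - j) + 1 = m + 2 := by omega
      -- step 1: sign of g (m+1)
      have hA : ∀ x ∈ I, (xs < x → 0 < σ * g (m + 1) x) ∧ (x < xs → σ * g (m + 1) x < 0) := by
        apply stmt5_auxA hmem
        · intro y hy
          exact (hgdiff (m + 1) (by omega) y hy).const_mul σ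
        · show σ * iteratedDerivWithin (m + 1) φ I xs = 0
          rw [hderiv (m + 1) (by omega) (by omega), mul_zero]
        · intro y hy hyne
          rw [deriv_const_mul σ (hgdiff (m + 1) (by omega) y hy), hgsucc (m + 1) y hy,
            ← hm2]
          exact ihj y hy hyne
      -- step 2: sign of g m
      have hB : ∀ x ∈ I, x ≠ xs → 0 < σ * g m x := by
        apply stmt5_auxB hmem
        · intro y hy
          exact (hgdiff m (by omega) y hy).const_mul σ
        · show σ * iteratedDerivWithin m φ I xs = 0
          rw [hderiv m (by omega) (by omega), mul_zero]
        · intro y hy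
          constructor
          · intro h
            rw [deriv_const_mul σ (hgdiff m (by omega) y hy), hgsucc m y hy]
            exact (hA y hy).1 h
          · intro h
            rw [deriv_const_mul σ (hgdiff m (by omega) y hy), hgsucc m y hy]
            exact (hA y hy).2 h
      exact hB x hx hne
  -- sign of φ'
  have hφdiff : ∀ x ∈ I, DifferentiableAt ℝ φ x := by
    intro x hx
    have : DifferentiableOn ℝ φ I := hsmooth.differentiableOn (by norm_num)
    exact (this x hx).differentiableAt (hIopen.mem_nhds hx)
  have hderivφ : ∀ x ∈ I, x ≠ xs → 0 < σ * deriv φ x := by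
    intro x hx hne
    have h1 := key N le_rfl x hx hne
    rw [Nat.sub_self, Nat.mul_zero, Nat.zero_add] at h1
    have : g 1 x = deriv φ x := by
      show iteratedDerivWithin 1 φ I x = deriv φ x
      rw [iteratedDerivWithin_one, derivWithin_of_isOpen hIopen hx]
    rwa [this] at h1
  -- sign of ψ = σ * (φ - κs)
  set ψ : ℝ → ℝ := fun x => σ * (φ x - κs) with hψ
  have hψdiff : ∀ x ∈ I, DifferentiableAt ℝ ψ x := by
    intro x hx
    exact ((hφdiff x hx).sub_const κs).const_mul σ
  have hψsign : ∀ x ∈ I, (xs < x → 0 < ψ x) ∧ (x < xs → ψ x < 0) := by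
    apply stmt5_auxA hmem hψdiff
    · rw [hψ]; simp [hval]
    · intro y hy hyne
      have : deriv ψ y = σ * deriv φ y := by
        rw [hψ, deriv_const_mul σ ((hφdiff y hy).sub_const κs), deriv_sub_const]
      rw [this]
      exact hderivφ y hy hyne
  have hψcont : ContinuousOn ψ I := fun x hx => (hψdiff x hx).continuousAt.continuousWithinAt
  -- endpoints
  have hbmem : xs + ε / 2 ∈ I := by rw [hI]; constructor <;> linarith
  have hamem : xs - ε / 2 ∈ I := by rw [hI]; constructor <;> linarith
  have hψxs : ψ xs = 0 := by rw [hψ]; simp [hval]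
  set δ₀ := ψ (xs + ε / 2) with hδ₀
  set δ₁ := -ψ (xs - ε / 2) with hδ₁
  have hδ₀pos : 0 < δ₀ := (hψsign _ hbmem).1 (by linarith)
  have hδ₁pos : 0 < δ₁ := by
    have := (hψsign _ hamem).2 (by linarith)
    rw [hδ₁]; linarith
  refine ⟨min δ₀ δ₁, lt_min hδ₀pos hδ₁pos, ?_⟩
  intro δ' hδ'
  obtain ⟨hδ'pos, hδ'lt⟩ := hδ'
  have hδ'0 : δ' < δ₀ := lt_of_lt_of_le hδ'lt (min_le_left _ _)
  have hδ'1 : δ' < δ₁ := lt_of_lt_of_le hδ'lt (min_le_right _ _)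
  constructor
  · -- right side
    have hsub : Set.Icc xs (xs + ε / 2) ⊆ I := Set.Icc_subset_Ioo hmem.1 hbmem.2
    have hivt := intermediate_value_Icc (by linarith : xs ≤ xs + ε / 2)
      (hψcont.mono hsub)
    have hmemval : δ' ∈ Set.Icc (ψ xs) (ψ (xs + ε / 2)) := by
      rw [hψxs]; exact ⟨hδ'pos.le, hδ'0.le⟩
    obtain ⟨x1, hx1mem, hx1val⟩ := hivt hmemval
    have hx1I : x1 ∈ I := hsub hx1mem
    have hx1ne : x1 ≠ xs := by
      intro h; rw [h, hψxs] at hx1val; linarith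
    have hx1gt : xs < x1 := lt_of_le_of_ne hx1mem.1 (Ne.symm hx1ne)
    refine ⟨x1, by linarith, ?_, ?_, ?_⟩
    · have := hx1mem.2; linarith
    · have h1 : σ * (φ x1 - κs) = δ' := hx1val
      rcases hσ with h | h <;> rw [h] at h1 ⊢ <;> linarith
    · intro h
      have := hderivφ x1 hx1I hx1ne
      rw [h, mul_zero] at this; exact lt_irrefl 0 this
  · -- left side
    have hsub : Set.Icc (xs - ε / 2) xs ⊆ I := Set.Icc_subset_Ioo hamem.1 hmem.2
    have hivt := intermediate_value_Icc (by linarith : xs - ε / 2 ≤ xs)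
      (hψcont.mono hsub)
    have hmemval : -δ' ∈ Set.Icc (ψ (xs - ε / 2)) (ψ xs) := by
      rw [hψxs]
      constructor
      · rw [hδ₁] at hδ'1; linarith
      · linarith
    obtain ⟨x2, hx2mem, hx2val⟩ := hivt hmemval
    have hx2I : x2 ∈ I := hsub hx2mem
    have hx2ne : x2 ≠ xs := by
      intro h; rw [h, hψxs] at hx2val; linarith
    have hx2lt : x2 < xs := lt_of_le_of_ne hx2mem.2 hx2ne
    refine ⟨x2, ?_, by linarith, ?_, ?_⟩
    · have := hx2mem.1; linarith
    · have h1 : σ * (φ x2 - κs) = -δ' := hx2val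
      rcases hσ with h | h <;> rw [h] at h1 ⊢ <;> linarith
    · intro h
      have := hderivφ x2 hx2I hx2ne
      rw [h, mul_zero] at this; exact lt_irrefl 0 this
end

section
/- Let q be a real polynomial with exactly N roots in an open interval, and call a simple root x^(i) 'stable' if q'(x^(i)) < 0. Then at most ⌈N/2⌉ of the roots in the interval are stable. -/
open Filter Set

private lemma aux_slope_neg (q : Polynomial ℝ) (c : ℝ) (h' : q.derivative.eval c < 0) :
    ∀ᶠ x in nhdsWithin c {c}ᶜ, slope (fun y => q.eval y) c x < 0 := by
  have hd : HasDerivAt (fun x => q.eval x) (q.derivative.eval c) c := q.hasDerivAt c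
  exact (hasDerivAt_iff_tendsto_slope.mp hd).eventually_lt_const h'

private lemma aux_neg_right (q : Polynomial ℝ) (c : ℝ) (h0 : q.eval c = 0)
    (h' : q.derivative.eval c < 0) :
    ∀ᶠ x in nhdsWithin c (Set.Ioi c), q.eval x < 0 := by
  have hmem : nhdsWithin c (Set.Ioi c) ≤ nhdsWithin c {c}ᶜ :=
    nhdsWithin_mono c (fun x hx => ne_of_gt hx)
  filter_upwards [hmem (aux_slope_neg q c h'), self_mem_nhdsWithin] with x hx hx'
  have hxc : (0:ℝ) < x - c := sub_pos.mpr hx'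
  have hs : slope (fun y => q.eval y) c x = q.eval x / (x - c) := by
    simp [slope_def_field, h0]
  rw [hs] at hx
  have := mul_neg_of_neg_of_pos hx hxc
  rwa [div_mul_cancel₀ _ (ne_of_gt hxc)] at this

private lemma aux_pos_left (q : Polynomial ℝ) (c : ℝ) (h0 : q.eval c = 0)
    (h' : q.derivative.eval c < 0) :
    ∀ᶠ x in nhdsWithin c (Set.Iio c), 0 < q.eval x := by
  have hmem : nhdsWithin c (Set.Iio c) ≤ nhdsWithin c {c}ᶜ :=
    nhdsWithin_mono c (fun x hx => ne_of_lt hx)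
  filter_upwards [hmem (aux_slope_neg q c h'), self_mem_nhdsWithin] with x hx hx'
  have hxc : x - c < 0 := sub_neg.mpr hx'
  have hs : slope (fun y => q.eval y) c x = q.eval x / (x - c) := by
    simp [slope_def_field, h0]
  rw [hs] at hx
  have := mul_pos_of_neg_of_neg hx hxc
  rwa [div_mul_cancel₀ _ (ne_of_lt hxc)] at this

private lemma aux_root_between (q : Polynomial ℝ) (c1 c2 : ℝ) (hlt : c1 < c2)
    (h1 : q.eval c1 = 0) (h2 : q.eval c2 = 0)
    (h1' : q.derivative.eval c1 < 0) (h2' : q.derivative.eval c2 < 0) :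
    ∃ x, c1 < x ∧ x < c2 ∧ q.eval x = 0 := by
  have e1 : ∀ᶠ x in nhdsWithin c1 (Set.Ioi c1), q.eval x < 0 ∧ x ∈ Set.Ioo c1 c2 :=
    (aux_neg_right q c1 h1 h1').and (Ioo_mem_nhdsGT_of_mem ⟨le_refl c1, hlt⟩)
  obtain ⟨x1, hx1neg, hx1mem⟩ := e1.exists
  have e2 : ∀ᶠ x in nhdsWithin c2 (Set.Iio c2), 0 < q.eval x ∧ x ∈ Set.Ioo x1 c2 :=
    (aux_pos_left q c2 h2 h2').and (Ioo_mem_nhdsLT_of_mem ⟨hx1mem.2, le_refl c2⟩)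
  obtain ⟨x2, hx2pos, hx2mem⟩ := e2.exists
  have hcont : ContinuousOn (fun y => q.eval y) (Set.Icc x1 x2) :=
    (q.continuous_aeval).continuousOn
  have h0mem : (0:ℝ) ∈ Set.Ioo (q.eval x1) (q.eval x2) := ⟨hx1neg, hx2pos⟩
  have := intermediate_value_Ioo (le_of_lt hx2mem.1) hcont h0mem
  obtain ⟨x, hxmem, hx0⟩ := this
  exact ⟨x, lt_trans hx1mem.1 hxmem.1, lt_trans hxmem.2 hx2mem.2, hx0⟩

/-- If a real polynomial `q` has exactly `N` roots in an open interval, then at most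
`⌈N/2⌉` of them are "stable", i.e., satisfy `q' < 0` there. -/
theorem stmt13 (q : Polynomial ℝ) (N : ℕ) (a : ℝ) (M : EReal)
    (z : Fin N → ℝ) (hmono : StrictMono z)
    (hroots : ∀ i, a < z i ∧ ((z i : EReal) < M) ∧ q.eval (z i) = 0)
    (hexact : ∀ x : ℝ, a < x → (x : EReal) < M → q.eval x = 0 → ∃ i, x = z i) :
    {i : Fin N | q.derivative.eval (z i) < 0}.ncard ≤ (N + 1) / 2 := by
  -- no two "adjacent" roots can both be stable
  have hnotadj : ∀ i j : Fin N, q.derivative.eval (z i) < 0 →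
      q.derivative.eval (z j) < 0 → (j : ℕ) ≠ (i : ℕ) + 1 := by
    intro i j hi hj hji
    have hij : i < j := by rw [Fin.lt_def]; omega
    have hzij : z i < z j := hmono hij
    obtain ⟨x, hx1, hx2, hx0⟩ :=
      aux_root_between q (z i) (z j) hzij (hroots i).2.2 (hroots j).2.2 hi hj
    have hax : a < x := lt_trans (hroots i).1 hx1
    have hxM : (x : EReal) < M :=
      lt_trans (EReal.coe_lt_coe_iff.mpr hx2) (hroots j).2.1
    obtain ⟨k, hk⟩ := hexact x hax hxM hx0
    subst hk
    have h1 : i < k := hmono.lt_iff_lt.mp hx1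
    have h2 : k < j := hmono.lt_iff_lt.mp hx2
    rw [Fin.lt_def] at h1 h2
    omega
  have hmaps : ∀ i ∈ {i : Fin N | q.derivative.eval (z i) < 0},
      (i : ℕ) / 2 ∈ (↑(Finset.range ((N + 1) / 2)) : Set ℕ) := by
    intro i _
    simp only [Finset.coe_range, Set.mem_Iio]
    have := i.isLt
    omega
  have hinj : Set.InjOn (fun i : Fin N => (i : ℕ) / 2)
      {i : Fin N | q.derivative.eval (z i) < 0} := by
    intro i hi j hj hij
    simp only [Set.mem_setOf_eq] at hi hj
    simp only at hij
    by_contra hne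
    have hvne : (i : ℕ) ≠ (j : ℕ) := fun h => hne (Fin.ext h)
    have : (j : ℕ) = (i : ℕ) + 1 ∨ (i : ℕ) = (j : ℕ) + 1 := by omega
    rcases this with h | h
    · exact hnotadj i j hi hj h
    · exact hnotadj j i hj hi h
  have := Set.ncard_le_ncard_of_injOn _ hmaps hinj (Finset.range ((N + 1) / 2)).finite_toSet
  rwa [Set.ncard_coe_finset, Finset.card_range] at this
end

section
/- Let q_κ(x) be a polynomial in x depending polynomially on a parameter κ ∈ ℝ^m, and suppose q_{κ*} has exactly N real roots in an open interval (a, M), among which v roots have even multiplicity and N - v roots are simple or of odd multiplicity. Assume for each even-multiplicity root the even-split perturbation property holds (small one-sided perturbation of a single coordinate κ_ℓ produces two simple roots near it or none) and for each odd root the odd-persistence property holds (small perturbations in both directions produce one simple nearby root). Then for every ε > 0 there exists a perturbed parameter κ arbitrarily close to κ* such that q_κ has at least 2⌈v/2⌉ + (N - v) simple real roots in (a, M). -/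
/-- Combinatorial core of the nondegeneracy theorem: suppose `q κ*` has exactly `N`
roots `z 0 < ... < z (N-1)` in `(a, M)`, of which the `v` roots indexed by `E` have
even multiplicity and the rest are simple or of odd multiplicity. If each
even-multiplicity root satisfies the even-split perturbation property (a small
one-sided perturbation of the coordinate `κ ℓ` produces two simple nearby roots, and
the opposite perturbation produces none) and each odd root satisfies the
odd-persistence property (small perturbations in either direction produce one simple
nearby root), then for every `ε > 0` there is a parameter `κ` within `ε` of `κ*` such
that `q κ` has at least `2⌈v/2⌉ + (N - v)` simple roots in `(a, M)`. -/
theorem stmt19 (m N v : ℕ) (hvN : v ≤ N) (hN : 0 < N)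
    (q : (Fin m → ℝ) → Polynomial ℝ) (κstar : Fin m → ℝ) (ℓ : Fin m)
    (a : ℝ) (M : EReal) (z : Fin N → ℝ) (hmono : StrictMono z)
    (hroots : ∀ i, a < z i ∧ ((z i : EReal) < M) ∧ (q κstar).eval (z i) = 0)
    (hexact : ∀ x : ℝ, a < x → (x : EReal) < M → (q κstar).eval x = 0 → ∃ i, x = z i)
    (E : Finset (Fin N)) (hE : E.card = v)
    (hEvenMult : ∀ i ∈ E, Even ((q κstar).rootMultiplicity (z i)))
    (hOddMult : ∀ i ∉ E, Odd ((q κstar).rootMultiplicity (z i)))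
    (hEvenSplit : ∀ i ∈ E, ∀ ε > (0 : ℝ), ∃ δ : ℝ, δ ≠ 0 ∧
      ∀ δ' ∈ Set.Ioo (0 : ℝ) |δ|,
        (∃ y1 y2 : ℝ, y1 ≠ y2 ∧ |y1 - z i| < ε ∧ |y2 - z i| < ε ∧
          (∀ y ∈ ({y1, y2} : Set ℝ),
            (q (Function.update κstar ℓ (κstar ℓ + Real.sign δ * δ'))).eval y = 0 ∧
            (q (Function.update κstar ℓ (κstar ℓ + Real.sign δ * δ'))).derivative.eval y
              ≠ 0)) ∧
        (∀ y : ℝ, |y - z i| < ε →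
          (q (Function.update κstar ℓ (κstar ℓ - Real.sign δ * δ'))).eval y ≠ 0))
    (hOddPersist : ∀ i ∉ E, ∀ ε > (0 : ℝ), ∃ δ > (0 : ℝ),
      ∀ δ' ∈ Set.Ioo (0 : ℝ) δ, ∀ s : ℝ, s = 1 ∨ s = -1 →
        ∃ y : ℝ, |y - z i| < ε ∧
          (q (Function.update κstar ℓ (κstar ℓ + s * δ'))).eval y = 0 ∧
          (q (Function.update κstar ℓ (κstar ℓ + s * δ'))).derivative.eval y ≠ 0) :
    ∀ ε > (0 : ℝ), ∃ κ : Fin m → ℝ, (∀ j, |κ j - κstar j| < ε) ∧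
      ∃ (K : ℕ) (y : Fin K → ℝ), 2 * ((v + 1) / 2) + (N - v) ≤ K ∧
        Function.Injective y ∧
        ∀ j, a < y j ∧ ((y j : EReal) < M) ∧ (q κ).eval (y j) = 0 ∧
          (q κ).derivative.eval (y j) ≠ 0 := by
  intro ε hε
  classical
  have hNE : Nonempty (Fin N) := Fin.pos_iff_nonempty.mp hN
  have hune : (Finset.univ : Finset (Fin N)).Nonempty := Finset.univ_nonempty
  -- a radius around each root staying below M
  have hM : ∀ i : Fin N, ∃ b > (0:ℝ), ∀ y : ℝ, |y - z i| < b → (y : EReal) < M := by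
    intro i
    have hopen : IsOpen {y : ℝ | (y : EReal) < M} :=
      isOpen_Iio.preimage continuous_coe_real_ereal
    rcases Metric.isOpen_iff.mp hopen _ ((hroots i).2.1) with ⟨b, hbp, hball⟩
    exact ⟨b, hbp, fun y hy => hball (by simpa [Metric.mem_ball, Real.dist_eq] using hy)⟩
  choose b hbpos hb using hM
  -- a uniform gap between roots
  have hgap : ∃ d > (0:ℝ), ∀ i j : Fin N, i ≠ j → d ≤ |z i - z j| := by
    by_cases hP : ((Finset.univ : Finset (Fin N)).offDiag).Nonempty
    · refine ⟨(Finset.univ.offDiag).inf' hP (fun pr => |z pr.1 - z pr.2|), ?_, ?_⟩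
      · rw [gt_iff_lt, Finset.lt_inf'_iff]
        rintro ⟨i, j⟩ hpr
        rcases Finset.mem_offDiag.mp hpr with ⟨-, -, hne⟩
        exact abs_pos.mpr (sub_ne_zero.mpr fun h => hne (hmono.injective h))
      · intro i j hij
        have hmem : ((i, j) : Fin N × Fin N) ∈ Finset.univ.offDiag :=
          Finset.mem_offDiag.mpr ⟨Finset.mem_univ i, Finset.mem_univ j, hij⟩
        exact Finset.inf'_le _ hmem
    · refine ⟨1, one_pos, fun i j hij => ?_⟩
      have hmem : ((i, j) : Fin N × Fin N) ∈ Finset.univ.offDiag :=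
        Finset.mem_offDiag.mpr ⟨Finset.mem_univ i, Finset.mem_univ j, hij⟩
      exact absurd hmem (fun h => hP ⟨_, h⟩)
  obtain ⟨d, hdpos, hdle⟩ := hgap
  set ε0 : ℝ :=
    min ((Finset.univ : Finset (Fin N)).inf' hune (fun i => min (z i - a) (b i))) (d/2)
    with hε0def
  have hε0pos : 0 < ε0 := by
    refine lt_min ?_ (by linarith)
    rw [Finset.lt_inf'_iff]
    intro i _
    exact lt_min (by linarith [(hroots i).1]) (hbpos i)
  have hε0a : ∀ i, ε0 ≤ z i - a := fun i =>
    le_trans (min_le_left _ _)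
      (le_trans (Finset.inf'_le _ (Finset.mem_univ i)) (min_le_left _ _))
  have hε0b : ∀ i, ε0 ≤ b i := fun i =>
    le_trans (min_le_left _ _)
      (le_trans (Finset.inf'_le _ (Finset.mem_univ i)) (min_le_right _ _))
  have hε0d : ε0 ≤ d/2 := min_le_right _ _
  -- choose the even-split direction for each even root
  have hES : ∀ i : Fin N, ∃ δ : ℝ, i ∈ E → (δ ≠ 0 ∧ ∀ δ' ∈ Set.Ioo (0:ℝ) |δ|,
      (∃ y1 y2 : ℝ, y1 ≠ y2 ∧ |y1 - z i| < ε0 ∧ |y2 - z i| < ε0 ∧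
        (∀ y ∈ ({y1, y2} : Set ℝ),
          (q (Function.update κstar ℓ (κstar ℓ + Real.sign δ * δ'))).eval y = 0 ∧
          (q (Function.update κstar ℓ (κstar ℓ + Real.sign δ * δ'))).derivative.eval y
            ≠ 0))) := by
    intro i
    by_cases hi : i ∈ E
    · rcases hEvenSplit i hi ε0 hε0pos with ⟨δ, h1, h2⟩
      exact ⟨δ, fun _ => ⟨h1, fun δ' hδ' => (h2 δ' hδ').1⟩⟩
    · exact ⟨1, fun h => absurd h hi⟩
  choose δE hδE using hES
  have hOS : ∀ i : Fin N, ∃ δ : ℝ, 0 < δ ∧ (i ∉ E →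
      ∀ δ' ∈ Set.Ioo (0:ℝ) δ, ∀ s : ℝ, s = 1 ∨ s = -1 →
        ∃ y : ℝ, |y - z i| < ε0 ∧
          (q (Function.update κstar ℓ (κstar ℓ + s * δ'))).eval y = 0 ∧
          (q (Function.update κstar ℓ (κstar ℓ + s * δ'))).derivative.eval y ≠ 0) := by
    intro i
    by_cases hi : i ∈ E
    · exact ⟨1, one_pos, fun h => absurd hi h⟩
    · rcases hOddPersist i hi ε0 hε0pos with ⟨δ, h1, h2⟩
      exact ⟨δ, h1, fun _ => h2⟩
  choose δO hδOpos hδO using hOS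
  -- pigeonhole on the sign
  have hkey : ∃ s : ℝ, (s = 1 ∨ s = -1) ∧ ∃ S : Finset (Fin N), S ⊆ E ∧
      (v+1)/2 ≤ S.card ∧ ∀ i ∈ S, Real.sign (δE i) = s := by
    have hsplit := Finset.card_filter_add_card_filter_not (s := E)
      (fun i => 0 < δE i)
    by_cases hc : (v+1)/2 ≤ (E.filter (fun i => 0 < δE i)).card
    · exact ⟨1, Or.inl rfl, E.filter (fun i => 0 < δE i), Finset.filter_subset _ _, hc,
        fun i hi => Real.sign_of_pos (Finset.mem_filter.mp hi).2⟩
    · refine ⟨-1, Or.inr rfl, E.filter (fun i => ¬ 0 < δE i),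
        Finset.filter_subset _ _, ?_, ?_⟩
      · rw [hE] at hsplit; omega
      · intro i hi
        rcases Finset.mem_filter.mp hi with ⟨hiE, hneg⟩
        exact Real.sign_of_neg (lt_of_le_of_ne (not_lt.mp hneg) ((hδE i hiE).1))
  obtain ⟨s, hs, S, hSsub, hScard, hsign⟩ := hkey
  -- a common small perturbation size
  set f : Fin N → ℝ := fun i => if i ∈ S then |δE i| else if i ∈ E then 1 else δO i
    with hf
  set δb : ℝ := min ε (Finset.univ.inf' hune f) with hδb
  have hδbpos : 0 < δb := by
    refine lt_min hε ?_
    rw [Finset.lt_inf'_iff]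
    intro i _
    simp only [hf]
    split
    · next h => exact abs_pos.mpr ((hδE i (hSsub h)).1)
    · split
      · exact one_pos
      · exact hδOpos i
  set δ' : ℝ := δb / 2 with hδ'def
  have hδ'pos : 0 < δ' := by positivity
  have hδ'lt : δ' < δb := by rw [hδ'def]; linarith
  have hδ'ε : δ' < ε := lt_of_lt_of_le hδ'lt (min_le_left _ _)
  have hδ'f : ∀ i, δ' < f i := fun i =>
    lt_of_lt_of_le hδ'lt
      (le_trans (min_le_right _ _) (Finset.inf'_le _ (Finset.mem_univ i)))
  set κ : Fin m → ℝ := Function.update κstar ℓ (κstar ℓ + s * δ') with hκ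
  refine ⟨κ, ?_, ?_⟩
  · intro j
    by_cases hj : j = ℓ
    · subst hj
      rw [hκ, Function.update_self]
      have habs : |s| = 1 := by rcases hs with h | h <;> simp [h]
      rw [show κstar j + s * δ' - κstar j = s * δ' by ring, abs_mul, habs, one_mul,
        abs_of_pos hδ'pos]
      exact hδ'ε
    · rw [hκ, Function.update_of_ne hj]
      simpa using hε
  -- the simple roots produced
  have hSy : ∀ i : Fin N, ∃ pr : ℝ × ℝ, i ∈ S →
      (pr.1 ≠ pr.2 ∧ |pr.1 - z i| < ε0 ∧ |pr.2 - z i| < ε0 ∧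
      ∀ u ∈ ({pr.1, pr.2} : Set ℝ),
        (q κ).eval u = 0 ∧ (q κ).derivative.eval u ≠ 0) := by
    intro i
    by_cases hi : i ∈ S
    · have hiE := hSsub hi
      have h2 := (hδE i hiE).2 δ'
        ⟨hδ'pos, by have := hδ'f i; simpa [hf, hi] using this⟩
      rw [hsign i hi] at h2
      obtain ⟨y1, y2, h⟩ := h2
      exact ⟨(y1, y2), fun _ => by rw [hκ]; exact h⟩
    · exact ⟨(0,0), fun h => absurd h hi⟩
  choose pr hpr using hSy
  have hOy : ∀ i : Fin N, ∃ u : ℝ, i ∉ E → (|u - z i| < ε0 ∧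
      (q κ).eval u = 0 ∧ (q κ).derivative.eval u ≠ 0) := by
    intro i
    by_cases hi : i ∈ E
    · exact ⟨0, fun h => absurd hi h⟩
    · have hiS : i ∉ S := fun h => hi (hSsub h)
      obtain ⟨u, hu⟩ := hδO i hi δ'
        ⟨hδ'pos, by have := hδ'f i; simpa [hf, hi, hiS] using this⟩ s hs
      exact ⟨u, fun _ => by rw [hκ]; exact hu⟩
  choose yO hyO using hOy
  set g : Fin N → Finset ℝ := fun i => if i ∈ S then {(pr i).1, (pr i).2} else {yO i}
    with hg
  set T : Finset (Fin N) := S ∪ Eᶜ with hT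
  have hgood : ∀ i ∈ T, ∀ u ∈ g i, |u - z i| < ε0 ∧
      (q κ).eval u = 0 ∧ (q κ).derivative.eval u ≠ 0 := by
    intro i hi u hu
    by_cases hiS : i ∈ S
    · obtain ⟨hne, h1, h2, h3⟩ := hpr i hiS
      rw [hg] at hu
      simp only [if_pos hiS] at hu
      rcases Finset.mem_insert.mp hu with h | h
      · subst h; exact ⟨h1, h3 _ (Or.inl rfl)⟩
      · rw [Finset.mem_singleton] at h; subst h; exact ⟨h2, h3 _ (Or.inr rfl)⟩
    · have hiE : i ∉ E := by
        rcases Finset.mem_union.mp hi with h | h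
        · exact absurd h hiS
        · exact Finset.mem_compl.mp h
      obtain ⟨h1, h2⟩ := hyO i hiE
      rw [hg] at hu
      simp only [if_neg hiS, Finset.mem_singleton] at hu
      subst hu; exact ⟨h1, h2⟩
  have hdisj : ∀ i ∈ T, ∀ j ∈ T, i ≠ j → Disjoint (g i) (g j) := by
    intro i hi j hj hij
    rw [Finset.disjoint_left]
    intro u hui huj
    have h1 := (hgood i hi u hui).1
    have h2 := (hgood j hj u huj).1
    have key : |z i - z j| ≤ |u - z i| + |u - z j| := by
      have h3 := abs_sub_le (z i) u (z j)
      rwa [abs_sub_comm (z i) u] at h3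
    have := hdle i j hij
    linarith
  set Y : Finset ℝ := T.biUnion g with hY
  have hcompl : (Eᶜ : Finset (Fin N)).card = N - v := by
    rw [Finset.card_compl, hE, Fintype.card_fin]
  have hSEdisj : Disjoint S (Eᶜ : Finset (Fin N)) := by
    rw [Finset.disjoint_left]
    intro i hiS hiC
    exact (Finset.mem_compl.mp hiC) (hSsub hiS)
  have hYcard : 2 * ((v+1)/2) + (N - v) ≤ Y.card := by
    rw [hY, Finset.card_biUnion hdisj, hT, Finset.sum_union hSEdisj]
    have h1 : ∑ i ∈ S, (g i).card = 2 * S.card := by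
      rw [Finset.sum_congr rfl (fun i hi => ?_), Finset.sum_const, smul_eq_mul,
        mul_comm]
      · rw [hg]
        simp only [if_pos hi]
        exact Finset.card_pair (hpr i hi).1
    have h2 : ∑ i ∈ (Eᶜ : Finset (Fin N)), (g i).card = (Eᶜ : Finset (Fin N)).card := by
      rw [Finset.sum_congr rfl (fun i hi => ?_), Finset.sum_const, smul_eq_mul,
        mul_one]
      · have hiS : i ∉ S := fun h => (Finset.mem_compl.mp hi) (hSsub h)
        rw [hg]
        simp only [if_neg hiS]
        exact Finset.card_singleton _
    rw [h1, h2, hcompl]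
    omega
  refine ⟨Y.card, fun j => ((Y.orderIsoOfFin rfl) j : ℝ), hYcard, ?_, ?_⟩
  · intro j j' h
    exact (Y.orderIsoOfFin rfl).injective (Subtype.ext h)
  · intro j
    have hmem : ((Y.orderIsoOfFin rfl) j : ℝ) ∈ Y := ((Y.orderIsoOfFin rfl) j).2
    obtain ⟨i, hiT, hui⟩ := Finset.mem_biUnion.mp hmem
    obtain ⟨h1, h2, h3⟩ := hgood i hiT _ hui
    refine ⟨?_, ?_, h2, h3⟩
    · have ha := hε0a i
      have habs := abs_lt.mp h1
      linarith [habs.1]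
    · exact hb i _ (lt_of_lt_of_le h1 (hε0b i))
end
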